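/- Let (i_0, …, i_n) be a finite sequence of positive integers such that the cylinder I_{i_0…i_n} = ⋂_{k=0}^n T^{−k}([i_k − 1, i_k]) has nonempty interior, and let k be a positive integer with k ≤ 4^{ℓ(i_n)} + 1. Then λ(I_{i_0…i_n k}) = λ(I_{i_0…i_n}) / (4^{ℓ(i_n)} + 1), where I_{i_0…i_n k} = I_{i_0…i_n} ∩ T^{−(n+1)}([k−1, k]). -/

import Mathlib

open Set Filter

noncomputable section

/-- `ell n = min {k ∈ ℤ⁺ : n ≤ 4^k}`. -/
def ell (n : ℕ) : ℕ := sInf {k : ℕ | 1 ≤ k ∧ n ≤ 4 ^ k}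

/-- The value of the map `T` at the nonnegative integer `n`:
`0` if `n` is even and `4 ^ ℓ(n) + 1` if `n` is odd. -/
def Tval (n : ℕ) : ℝ := if Even n then 0 else 4 ^ ell n + 1

/-- `T : [0,∞) → [0,∞)` is the unique continuous map which is affine on each
integer interval `[n-1, n]` and takes the value `Tval n` at every nonnegative
integer `n`.  This is expressed by linear interpolation on each `[n, n+1]`. -/
def IsT (T : ℝ → ℝ) : Prop :=
  ∀ n : ℕ, ∀ x ∈ Set.Icc (n : ℝ) (n + 1),
    T x = ((n : ℝ) + 1 - x) * Tval n + (x - (n : ℝ)) * Tval (n + 1)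

/-- `(x_k)` is a `δ`-pseudo orbit of `T` in `[0,∞)`. -/
def IsPseudoOrbit (T : ℝ → ℝ) (δ : ℝ) (x : ℕ → ℝ) : Prop :=
  (∀ k, 0 ≤ x k) ∧ ∀ k, |x (k + 1) - T (x k)| < δ

lemma ell_spec (n : ℕ) : 1 ≤ ell n ∧ n ≤ 4 ^ ell n := by
  have hne : {k : ℕ | 1 ≤ k ∧ n ≤ 4 ^ k}.Nonempty := by
    refine ⟨n + 1, by norm_num, ?_⟩
    calc n ≤ 4 ^ n := (Nat.lt_pow_self (by norm_num : 1 < 4)).le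
    _ ≤ 4 ^ (n+1) := Nat.pow_le_pow_right (by norm_num) (Nat.le_succ n)
  exact Nat.sInf_mem hne

lemma ell_odd_succ (j : ℕ) (hj : Odd j) : ell (j + 1) = ell j := by
  unfold ell
  congr 1
  ext k
  simp only [mem_setOf_eq, and_congr_right_iff]
  intro hk
  constructor
  · intro h; omega
  · intro h
    rcases lt_or_eq_of_le h with h | h
    · omega
    · exfalso
      have : Even (4 ^ k) := by
        have : k ≠ 0 := by omega
        exact (Nat.even_pow (n := k)).mpr ⟨by decide, this⟩
      rw [← h] at this
      exact (Nat.not_even_iff_odd.mpr hj) this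

def GoodMap (f : ℝ → ℝ) (a b u v : ℝ) : Prop :=
  ∃ s c : ℝ, (∀ x ∈ Set.Icc a b, f x = s * x + c) ∧
    ((0 < s ∧ s * a + c = u ∧ s * b + c = v) ∨
     (s < 0 ∧ s * a + c = v ∧ s * b + c = u))

lemma GoodMap.preimage {f a b u v u' v'} (hab : a < b) (hf : GoodMap f a b u v)
    (h1 : u ≤ u') (h2 : u' < v') (h3 : v' ≤ v) :
    ∃ a' b', a' < b' ∧ Set.Icc a b ∩ f ⁻¹' Set.Icc u' v' = Set.Icc a' b' ∧
      GoodMap f a' b' u' v' ∧ (b' - a') * (v - u) = (b - a) * (v' - u') := by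
  obtain ⟨s, c, hfe, hfc⟩ := hf
  rcases hfc with ⟨hs, ha, hb⟩ | ⟨hs, ha, hb⟩
  · set a' := (u' - c) / s with ha'
    set b' := (v' - c) / s with hb'
    have hsa' : s * a' + c = u' := by rw [ha', mul_div_cancel₀ _ (ne_of_gt hs)]; ring
    have hsb' : s * b' + c = v' := by rw [hb', mul_div_cancel₀ _ (ne_of_gt hs)]; ring
    have haa' : a ≤ a' := by nlinarith
    have hb'b : b' ≤ b := by nlinarith
    have ha'b' : a' < b' := by nlinarith
    have hsub : Set.Icc a' b' ⊆ Set.Icc a b := Set.Icc_subset_Icc haa' hb'b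
    refine ⟨a', b', ha'b', ?_, ⟨s, c, fun x hx => hfe x (hsub hx), Or.inl ⟨hs, hsa', hsb'⟩⟩, by
      field_simp [ha', hb']; nlinarith⟩
    ext x
    simp only [Set.mem_inter_iff, Set.mem_preimage, Set.mem_Icc]
    constructor
    · rintro ⟨hx, hfx⟩
      rw [hfe x hx] at hfx
      obtain ⟨q1, q2⟩ := hfx
      exact ⟨by nlinarith, by nlinarith⟩
    · rintro ⟨q1, q2⟩
      have hx : x ∈ Set.Icc a b := hsub ⟨q1, q2⟩
      refine ⟨hx, ?_⟩
      rw [hfe x hx]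
      exact ⟨by nlinarith, by nlinarith⟩
  · set a' := (v' - c) / s with ha'
    set b' := (u' - c) / s with hb'
    have hsa' : s * a' + c = v' := by rw [ha', mul_div_cancel₀ _ (ne_of_lt hs)]; ring
    have hsb' : s * b' + c = u' := by rw [hb', mul_div_cancel₀ _ (ne_of_lt hs)]; ring
    have haa' : a ≤ a' := by nlinarith
    have hb'b : b' ≤ b := by nlinarith
    have ha'b' : a' < b' := by nlinarith
    have hsub : Set.Icc a' b' ⊆ Set.Icc a b := Set.Icc_subset_Icc haa' hb'b
    refine ⟨a', b', ha'b', ?_, ⟨s, c, fun x hx => hfe x (hsub hx), Or.inr ⟨hs, hsa', hsb'⟩⟩, by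
      field_simp [ha', hb', ne_of_lt hs]; nlinarith⟩
    ext x
    simp only [Set.mem_inter_iff, Set.mem_preimage, Set.mem_Icc]
    constructor
    · rintro ⟨hx, hfx⟩
      rw [hfe x hx] at hfx
      obtain ⟨q1, q2⟩ := hfx
      exact ⟨by nlinarith, by nlinarith⟩
    · rintro ⟨q1, q2⟩
      have hx : x ∈ Set.Icc a b := hsub ⟨q1, q2⟩
      refine ⟨hx, ?_⟩
      rw [hfe x hx]
      exact ⟨by nlinarith, by nlinarith⟩

/-- The "height" of the tent on `[j-1,j]`. -/
def Mr (j : ℕ) : ℝ := 4 ^ ell j + 1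

lemma Mr_pos (j : ℕ) : 0 < Mr j := by unfold Mr; positivity

lemma Tgood {T : ℝ → ℝ} (hT : IsT T) (j : ℕ) (hj : 1 ≤ j) :
    GoodMap T ((j : ℝ) - 1) (j : ℝ) 0 (Mr j) := by
  obtain ⟨m, rfl⟩ : ∃ m, j = m + 1 := ⟨j - 1, by omega⟩
  have hcast : ((m + 1 : ℕ) : ℝ) - 1 = (m : ℝ) := by push_cast; ring
  have hfe := hT m
  rcases Nat.even_or_odd m with hm | hm
  · -- m even, j = m+1 odd : increasing
    have hv0 : Tval m = 0 := by simp [Tval, hm]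
    have hv1 : Tval (m + 1) = Mr (m + 1) := by
      simp [Tval, Nat.even_add_one, Nat.not_odd_iff_even.2 hm, Mr]
    refine ⟨Mr (m + 1), -(m : ℝ) * Mr (m + 1), ?_, Or.inl ⟨Mr_pos _, ?_, ?_⟩⟩
    · intro x hx
      rw [hcast] at hx
      have hx' : x ∈ Set.Icc (m:ℝ) ((m:ℝ)+1) := by
        simp only [Set.mem_Icc] at hx ⊢; push_cast at hx; exact hx
      rw [hfe x hx', hv0, hv1]; push_cast; ring
    · rw [hcast]; ring
    · push_cast; ring
  · -- m odd, j = m+1 even : decreasing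
    have hv0 : Tval m = Mr (m + 1) := by
      have : ell (m + 1) = ell m := ell_odd_succ m hm
      simp [Tval, Nat.not_even_iff_odd.2 hm, Mr, this]
    have hv1 : Tval (m + 1) = 0 := by
      simp [Tval, Nat.even_add_one, Nat.not_even_iff_odd.2 hm]
    refine ⟨-(Mr (m + 1)), ((m : ℝ) + 1) * Mr (m + 1), ?_,
      Or.inr ⟨by linarith [Mr_pos (m + 1)], ?_, ?_⟩⟩
    · intro x hx
      rw [hcast] at hx
      have hx' : x ∈ Set.Icc (m:ℝ) ((m:ℝ)+1) := by
        simp only [Set.mem_Icc] at hx ⊢; push_cast at hx; exact hx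
      rw [hfe x hx', hv0, hv1]; push_cast; ring
    · rw [hcast]; ring
    · push_cast; ring

lemma GoodMap.interior_subset_empty {f : ℝ → ℝ} {a b u v u' v' : ℝ}
    (h : GoodMap f a b u v) (huv : v ≤ u') :
    interior (Set.Icc a b ∩ f ⁻¹' Set.Icc u' v') = ∅ := by
  obtain ⟨s, c, hfe, hfc⟩ := h
  have hs : s ≠ 0 := by rcases hfc with ⟨h, -⟩ | ⟨h, -⟩ <;> [exact ne_of_gt h; exact ne_of_lt h]
  have hsub : Set.Icc a b ∩ f ⁻¹' Set.Icc u' v' ⊆ {(u' - c) / s} := by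
    rintro x ⟨hx, hfx⟩
    have hub : f x ≤ v := by
      rw [hfe x hx]
      obtain ⟨hx1, hx2⟩ := hx
      rcases hfc with ⟨h, h1, h2⟩ | ⟨h, h1, h2⟩ <;> nlinarith
    have : f x = u' := le_antisymm (le_trans hub huv) hfx.1
    rw [hfe x hx] at this
    simp only [Set.mem_singleton_iff]
    field_simp
    linarith
  have h2 := interior_mono hsub
  rw [interior_singleton] at h2
  exact Set.subset_empty_iff.1 h2


lemma GoodMap.uv_lt {f a b u v} (h : GoodMap f a b u v) (hab : a < b) : u < v := by
  obtain ⟨s, c, -, h | h⟩ := h <;> nlinarith [h.1, h.2.1, h.2.2]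

lemma GoodMap.mapsTo {f a b u v} (h : GoodMap f a b u v) :
    ∀ x ∈ Set.Icc a b, f x ∈ Set.Icc u v := by
  obtain ⟨s, c, hf, h | h⟩ := h <;> intro x hx <;>
    rw [hf x hx] <;> obtain ⟨hx1, hx2⟩ := hx <;>
    exact ⟨by nlinarith [h.1, h.2.1, h.2.2], by nlinarith [h.1, h.2.1, h.2.2]⟩

lemma GoodMap.comp {f g a b u v w z} (hab : a < b)
    (hf : GoodMap f a b u v) (hg : GoodMap g u v w z) :
    GoodMap (g ∘ f) a b w z := by
  have hmaps := hf.mapsTo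
  obtain ⟨s, c, hfe, hfc⟩ := hf
  obtain ⟨s₂, c₂, hge, hgc⟩ := hg
  refine ⟨s₂ * s, s₂ * c + c₂, ?_, ?_⟩
  · intro x hx
    have h1 : f x ∈ Set.Icc u v := hmaps x hx
    simp only [Function.comp_apply]
    rw [hge (f x) h1, hfe x hx]; ring
  · rcases hfc with ⟨hs, ha, hb⟩ | ⟨hs, ha, hb⟩ <;>
      rcases hgc with ⟨hs₂, hu, hv⟩ | ⟨hs₂, hu, hv⟩
    · exact Or.inl ⟨by positivity, by nlinarith, by nlinarith⟩
    · exact Or.inr ⟨by nlinarith, by nlinarith, by nlinarith⟩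
    · exact Or.inr ⟨by nlinarith, by nlinarith, by nlinarith⟩
    · exact Or.inl ⟨by nlinarith, by nlinarith, by nlinarith⟩



lemma key {T : ℝ → ℝ} (hT : IsT T) (i : ℕ → ℕ) :
    ∀ n : ℕ, (∀ m ≤ n, 1 ≤ i m) →
    (interior (⋂ m ∈ Finset.range (n + 1),
      T^[m] ⁻¹' Set.Icc ((i m : ℝ) - 1) (i m))).Nonempty →
    ∃ a b : ℝ, a < b ∧
      (⋂ m ∈ Finset.range (n + 1), T^[m] ⁻¹' Set.Icc ((i m : ℝ) - 1) (i m)) = Set.Icc a b ∧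
      GoodMap (T^[n + 1]) a b 0 (Mr (i n)) := by
  intro n
  induction n with
  | zero =>
    intro hi _
    have h1 : 1 ≤ i 0 := hi 0 le_rfl
    have hlt : ((i 0 : ℝ) - 1) < (i 0 : ℝ) := by linarith
    refine ⟨(i 0 : ℝ) - 1, (i 0 : ℝ), hlt, ?_, ?_⟩
    · simp
    · simpa using Tgood hT (i 0) h1
  | succ n ih =>
    intro hi hne
    have hsplit : (⋂ m ∈ Finset.range (n + 2), T^[m] ⁻¹' Set.Icc ((i m : ℝ) - 1) (i m)) =
        (⋂ m ∈ Finset.range (n + 1), T^[m] ⁻¹' Set.Icc ((i m : ℝ) - 1) (i m)) ∩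
        T^[n + 1] ⁻¹' Set.Icc ((i (n + 1) : ℝ) - 1) (i (n + 1)) := by
      rw [Finset.range_add_one, Finset.set_biInter_insert, Set.inter_comm]
    rw [hsplit] at hne
    have hneC : (interior (⋂ m ∈ Finset.range (n + 1),
        T^[m] ⁻¹' Set.Icc ((i m : ℝ) - 1) (i m))).Nonempty :=
      hne.mono (interior_mono Set.inter_subset_left)
    obtain ⟨a, b, hab, hC, hgood⟩ := ih (fun m hm => hi m (by omega)) hneC
    rw [hC] at hne
    set j := i (n + 1) with hj
    have hj1 : 1 ≤ j := hi (n + 1) le_rfl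
    -- j ≤ Mr (i n)
    have hjM : (j : ℝ) ≤ Mr (i n) := by
      by_contra hcon
      push_neg at hcon
      have : 4 ^ ell (i n) + 1 < j := by
        have := hcon
        rw [Mr] at this
        exact_mod_cast (by push_cast; linarith : ((4 ^ ell (i n) + 1 : ℕ) : ℝ) < (j : ℝ))
      have hle : Mr (i n) ≤ (j : ℝ) - 1 := by
        rw [Mr]
        have : (4 ^ ell (i n) + 2 : ℕ) ≤ j := by omega
        have := (Nat.cast_le (α := ℝ)).2 this
        push_cast at this
        linarith
      have := hgood.interior_subset_empty (u' := (j : ℝ) - 1) (v' := (j : ℝ)) hle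
      rw [this] at hne
      exact Set.not_nonempty_empty hne
    have hj1R : (1 : ℝ) ≤ (j : ℝ) := by exact_mod_cast hj1
    obtain ⟨a', b', ha'b', hset, hgood', hlen⟩ := hgood.preimage hab
      (by linarith : (0:ℝ) ≤ (j : ℝ) - 1) (by linarith) hjM
    refine ⟨a', b', ha'b', ?_, ?_⟩
    · rw [hsplit, hC, hset]
    · have hcomp := ha'b'.trans_le le_rfl
      have := GoodMap.comp ha'b' hgood' (Tgood hT j hj1)
      have hiter : T^[n + 2] = T ∘ T^[n + 1] := Function.iterate_succ' T (n + 1)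
      rw [hiter]
      exact this

/-- If the cylinder `I_{i₀…iₙ}` has nonempty interior and `1 ≤ k ≤ 4^{ℓ(iₙ)}+1`,
then `λ(I_{i₀…iₙk}) = λ(I_{i₀…iₙ}) / (4^{ℓ(iₙ)} + 1)`. -/
theorem cylinder_measure_ratio (T : ℝ → ℝ) (hT : IsT T) (n : ℕ)
    (i : ℕ → ℕ) (hi : ∀ m : ℕ, m ≤ n → 1 ≤ i m)
    (hne : (interior (⋂ m ∈ Finset.range (n + 1),
      T^[m] ⁻¹' Set.Icc ((i m : ℝ) - 1) (i m))).Nonempty)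
    (k : ℕ) (hk1 : 1 ≤ k) (hk : k ≤ 4 ^ ell (i n) + 1) :
    MeasureTheory.volume
        ((⋂ m ∈ Finset.range (n + 1), T^[m] ⁻¹' Set.Icc ((i m : ℝ) - 1) (i m)) ∩
          T^[n + 1] ⁻¹' Set.Icc ((k : ℝ) - 1) k) =
      MeasureTheory.volume
          (⋂ m ∈ Finset.range (n + 1), T^[m] ⁻¹' Set.Icc ((i m : ℝ) - 1) (i m)) /
        ((4 : ENNReal) ^ ell (i n) + 1) := by
  obtain ⟨a, b, hab, hC, hgood⟩ := key hT i n hi hne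
  have hk1R : (1 : ℝ) ≤ (k : ℝ) := by exact_mod_cast hk1
  have hkR : (k : ℝ) ≤ Mr (i n) := by
    rw [Mr]
    have := (Nat.cast_le (α := ℝ)).2 hk
    push_cast at this
    linarith
  obtain ⟨a', b', ha'b', hset, hgood', hlen⟩ := hgood.preimage hab
    (by linarith : (0:ℝ) ≤ (k : ℝ) - 1) (by linarith) hkR
  rw [hC, hset, Real.volume_Icc, Real.volume_Icc]
  have hM : (0:ℝ) < Mr (i n) := Mr_pos _
  have hba' : b' - a' = (b - a) / Mr (i n) := by
    have : (b' - a') * (Mr (i n) - 0) = (b - a) * ((k:ℝ) - ((k:ℝ) - 1)) := hlen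
    field_simp at this ⊢
    linarith
  rw [hba', ENNReal.ofReal_div_of_pos hM]
  congr 1
  rw [Mr, ENNReal.ofReal_add (by positivity) zero_le_one,
    ENNReal.ofReal_pow (by norm_num), ENNReal.ofReal_one]
  norm_num
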